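/- Let A be a Banach algebra and f ∈ A*. Define T_f : A → A* by (T_f a)(x) = f(ax). Then the following are equivalent: (i) f(x_n y_n) → 0 for all weakly null sequences (x_n), (y_n) in A; (ii) f(x_n y_n) → 0 whenever (x_n) is weakly null and (y_n) is weakly Cauchy; (iii) T_f maps weakly precompact subsets of A onto L-sets in A*. -/

import Mathlib

open Filter Topology ENNReal

/-- A sequence is weakly null if `f (x n) → 0` for every continuous linear functional `f`. -/
def WeaklyNull {A : Type*} [NormedAddCommGroup A] [NormedSpace ℝ A] (x : ℕ → A) : Prop :=
  ∀ f : A →L[ℝ] ℝ, Tendsto (fun n => f (x n)) atTop (𝓝 0)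

/-- A sequence is weakly Cauchy if `f (x n)` converges for every continuous linear functional. -/
def WeaklyCauchy {A : Type*} [NormedAddCommGroup A] [NormedSpace ℝ A] (x : ℕ → A) : Prop :=
  ∀ f : A →L[ℝ] ℝ, ∃ L : ℝ, Tendsto (fun n => f (x n)) atTop (𝓝 L)

/-- `E ⊆ A*` is an L-set: `sup_{f ∈ E} |f (x n)| → 0` for every weakly null `x`. -/
def LSet {A : Type*} [NormedAddCommGroup A] [NormedSpace ℝ A] (E : Set (A →L[ℝ] ℝ)) : Prop :=
  ∀ x : ℕ → A, WeaklyNull x → ∀ ε > (0 : ℝ), ∃ N : ℕ, ∀ n ≥ N, ∀ f ∈ E, |f (x n)| < ε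

/-- A set is weakly precompact if every sequence in it has a weakly Cauchy subsequence. -/
def WeaklyPrecompact {A : Type*} [NormedAddCommGroup A] [NormedSpace ℝ A] (K : Set A) : Prop :=
  ∀ x : ℕ → A, (∀ n, x n ∈ K) → ∃ φ : ℕ → ℕ, StrictMono φ ∧ WeaklyCauchy (x ∘ φ)

/-- A map is completely continuous if it sends weakly null sequences to norm null sequences. -/
def CompletelyContinuous {A B : Type*} [NormedAddCommGroup A] [NormedSpace ℝ A]
    [NormedAddCommGroup B] (T : A → B) : Prop :=
  ∀ x : ℕ → A, WeaklyNull x → Tendsto (fun n => ‖T (x n)‖) atTop (𝓝 0)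

/-- The multiplication operator `T_f : A → A*`, `(T_f a) x = f (a * x)`. -/
noncomputable def Tf {A : Type*} [NormedRing A] [NormedAlgebra ℝ A]
    (f : A →L[ℝ] ℝ) (a : A) : A →L[ℝ] ℝ :=
  f.comp (ContinuousLinearMap.mul ℝ A a)

/-- The multiplication operator `S_f : A → A*`, `(S_f a) x = f (x * a)`. -/
noncomputable def Sf {A : Type*} [NormedRing A] [NormedAlgebra ℝ A]
    (f : A →L[ℝ] ℝ) (a : A) : A →L[ℝ] ℝ :=
  f.comp ((ContinuousLinearMap.mul ℝ A).flip a)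

/-- `w` is an ℓ¹-sequence: equivalent to the unit vector basis of ℓ¹. -/
def IsL1Sequence {A : Type*} [NormedAddCommGroup A] [NormedSpace ℝ A] (w : ℕ → A) : Prop :=
  ∃ c C : ℝ, 0 < c ∧ ∀ (s : Finset ℕ) (lam : ℕ → ℝ),
    c * ∑ n ∈ s, |lam n| ≤ ‖∑ n ∈ s, lam n • w n‖ ∧
      ‖∑ n ∈ s, lam n • w n‖ ≤ C * ∑ n ∈ s, |lam n|

/-- The Schur property: weakly convergent sequences are norm convergent. -/
def SchurProperty (A : Type*) [NormedAddCommGroup A] [NormedSpace ℝ A] : Prop :=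
  ∀ (x : ℕ → A) (L : A),
    (∀ f : A →L[ℝ] ℝ, Tendsto (fun n => f (x n)) atTop (𝓝 (f L))) →
      Tendsto x atTop (𝓝 L)


section Aux

variable {A : Type*} [NormedRing A] [NormedAlgebra ℝ A]

lemma weaklyNull_wCauchy {x : ℕ → A} (hx : WeaklyNull x) : WeaklyCauchy x :=
  fun g => ⟨0, hx g⟩

lemma weaklyNull_comp {x : ℕ → A} (hx : WeaklyNull x) {φ : ℕ → ℕ} (hφ : StrictMono φ) :
    WeaklyNull (fun n => x (φ n)) :=
  fun g => (hx g).comp hφ.tendsto_atTop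

lemma p1_to_p2 (f : A →L[ℝ] ℝ)
    (h1 : ∀ x y : ℕ → A, WeaklyNull x → WeaklyNull y →
        Tendsto (fun n => f (x n * y n)) atTop (𝓝 0)) :
    ∀ x y : ℕ → A, WeaklyNull x → WeaklyCauchy y →
        Tendsto (fun n => f (x n * y n)) atTop (𝓝 0) := by
  intro x y hx hy
  by_contra hcon
  rw [Metric.tendsto_atTop] at hcon
  push_neg at hcon
  obtain ⟨ε, hε, hfreq⟩ := hcon
  obtain ⟨ψ, hψ, hψε⟩ := Filter.extraction_of_frequently_atTop
    (Filter.frequently_atTop.2 hfreq)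
  have key : ∀ i : ℕ, ∃ j, i < j ∧ |f (x (ψ j) * y (ψ i))| < ε / 4 := by
    intro i
    have h0 : Tendsto (fun j => f (x (ψ j) * y (ψ i))) atTop (𝓝 0) := by
      have := (hx (Sf f (y (ψ i)))).comp hψ.tendsto_atTop
      simpa [Sf, Function.comp_def] using this
    obtain ⟨N, hN⟩ := (Metric.tendsto_atTop.1 h0) (ε / 4) (by linarith)
    refine ⟨max N (i + 1), by omega, ?_⟩
    have := hN (max N (i + 1)) (le_max_left _ _)
    simpa [Real.dist_eq] using this
  choose g hg hgε using key
  set σ : ℕ → ℕ := fun k => Nat.rec 0 (fun _ ih => g ih) k with hσ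
  have hσsucc : ∀ k, σ (k + 1) = g (σ k) := fun k => rfl
  have hσs : StrictMono σ := strictMono_nat_of_lt_succ (fun k => by rw [hσsucc]; exact hg (σ k))
  have hmono1 : StrictMono (fun k => ψ (σ (k + 1))) :=
    fun a b h => hψ (hσs (Nat.succ_lt_succ h))
  have hu : WeaklyNull (fun k => x (ψ (σ (k + 1)))) := weaklyNull_comp hx hmono1
  have hv : WeaklyNull (fun k => y (ψ (σ (k + 1))) - y (ψ (σ k))) := by
    intro g0
    obtain ⟨L, hL⟩ := hy g0
    have h1' : Tendsto (fun k => g0 (y (ψ (σ (k + 1))))) atTop (𝓝 L) :=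
      hL.comp (hψ.comp hσs |>.comp (strictMono_id.add_const 1)).tendsto_atTop
    have h2' : Tendsto (fun k => g0 (y (ψ (σ k)))) atTop (𝓝 L) :=
      hL.comp (hψ.comp hσs).tendsto_atTop
    have := h1'.sub h2'
    simpa [map_sub] using this
  have hP := h1 _ _ hu hv
  rw [Metric.tendsto_atTop] at hP
  obtain ⟨N, hN⟩ := hP (ε / 2) (by linarith)
  have hNN := hN N le_rfl
  rw [Real.dist_eq, sub_zero] at hNN
  have hsplit : f (x (ψ (σ (N + 1))) * y (ψ (σ (N + 1)))) =
      f (x (ψ (σ (N + 1))) * (y (ψ (σ (N + 1))) - y (ψ (σ N)))) +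
        f (x (ψ (σ (N + 1))) * y (ψ (σ N))) := by
    rw [mul_sub, map_sub]; ring
  have hbig := hψε (σ (N + 1))
  rw [Real.dist_eq, sub_zero] at hbig
  have hsmall : |f (x (ψ (σ (N + 1))) * y (ψ (σ N)))| < ε / 4 := by
    rw [hσsucc]; exact hgε (σ N)
  have := abs_add_le (f (x (ψ (σ (N + 1))) * (y (ψ (σ (N + 1))) - y (ψ (σ N)))))
    (f (x (ψ (σ (N + 1))) * y (ψ (σ N))))
  rw [← hsplit] at this
  linarith

lemma p1_to_p2' (f : A →L[ℝ] ℝ)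
    (h1 : ∀ x y : ℕ → A, WeaklyNull x → WeaklyNull y →
        Tendsto (fun n => f (x n * y n)) atTop (𝓝 0)) :
    ∀ x y : ℕ → A, WeaklyCauchy x → WeaklyNull y →
        Tendsto (fun n => f (x n * y n)) atTop (𝓝 0) := by
  intro x y hx hy
  by_contra hcon
  rw [Metric.tendsto_atTop] at hcon
  push_neg at hcon
  obtain ⟨ε, hε, hfreq⟩ := hcon
  obtain ⟨ψ, hψ, hψε⟩ := Filter.extraction_of_frequently_atTop
    (Filter.frequently_atTop.2 hfreq)
  have key : ∀ i : ℕ, ∃ j, i < j ∧ |f (x (ψ i) * y (ψ j))| < ε / 4 := by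
    intro i
    have h0 : Tendsto (fun j => f (x (ψ i) * y (ψ j))) atTop (𝓝 0) := by
      have := (hy (Tf f (x (ψ i)))).comp hψ.tendsto_atTop
      simpa [Tf, Function.comp_def] using this
    obtain ⟨N, hN⟩ := (Metric.tendsto_atTop.1 h0) (ε / 4) (by linarith)
    refine ⟨max N (i + 1), by omega, ?_⟩
    have := hN (max N (i + 1)) (le_max_left _ _)
    simpa [Real.dist_eq] using this
  choose g hg hgε using key
  set σ : ℕ → ℕ := fun k => Nat.rec 0 (fun _ ih => g ih) k with hσ
  have hσsucc : ∀ k, σ (k + 1) = g (σ k) := fun k => rfl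
  have hσs : StrictMono σ := strictMono_nat_of_lt_succ (fun k => by rw [hσsucc]; exact hg (σ k))
  have hmono1 : StrictMono (fun k => ψ (σ (k + 1))) :=
    fun a b h => hψ (hσs (Nat.succ_lt_succ h))
  have hv : WeaklyNull (fun k => y (ψ (σ (k + 1)))) := weaklyNull_comp hy hmono1
  have hu : WeaklyNull (fun k => x (ψ (σ (k + 1))) - x (ψ (σ k))) := by
    intro g0
    obtain ⟨L, hL⟩ := hx g0
    have h1' : Tendsto (fun k => g0 (x (ψ (σ (k + 1))))) atTop (𝓝 L) :=
      hL.comp (hψ.comp hσs |>.comp (strictMono_id.add_const 1)).tendsto_atTop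
    have h2' : Tendsto (fun k => g0 (x (ψ (σ k)))) atTop (𝓝 L) :=
      hL.comp (hψ.comp hσs).tendsto_atTop
    have := h1'.sub h2'
    simpa [map_sub] using this
  have hP := h1 _ _ hu hv
  rw [Metric.tendsto_atTop] at hP
  obtain ⟨N, hN⟩ := hP (ε / 2) (by linarith)
  have hNN := hN N le_rfl
  rw [Real.dist_eq, sub_zero] at hNN
  have hsplit : f (x (ψ (σ (N + 1))) * y (ψ (σ (N + 1)))) =
      f ((x (ψ (σ (N + 1))) - x (ψ (σ N))) * y (ψ (σ (N + 1)))) +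
        f (x (ψ (σ N)) * y (ψ (σ (N + 1)))) := by
    rw [sub_mul, map_sub]; ring
  have hbig := hψε (σ (N + 1))
  rw [Real.dist_eq, sub_zero] at hbig
  have hsmall : |f (x (ψ (σ N)) * y (ψ (σ (N + 1))))| < ε / 4 := by
    rw [hσsucc]; exact hgε (σ N)
  have := abs_add_le (f ((x (ψ (σ (N + 1))) - x (ψ (σ N))) * y (ψ (σ (N + 1)))))
    (f (x (ψ (σ N)) * y (ψ (σ (N + 1)))))
  rw [← hsplit] at this
  linarith

lemma range_weaklyPrecompact {x : ℕ → A} (hx : WeaklyCauchy x) :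
    WeaklyPrecompact (Set.range x) := by
  intro z hz
  simp only [Set.mem_range] at hz
  choose m hm using hz
  by_cases hc : ∃ v, ∃ᶠ n in atTop, m n = v
  · obtain ⟨v, hv⟩ := hc
    obtain ⟨φ, hφ, hφv⟩ := Filter.extraction_of_frequently_atTop hv
    refine ⟨φ, hφ, fun g => ⟨g (x v), ?_⟩⟩
    have heq : (fun n => g ((z ∘ φ) n)) = fun _ => g (x v) := by
      funext n
      simp only [Function.comp_apply, ← hm (φ n), hφv n]
    rw [heq]
    exact tendsto_const_nhds
  · push_neg at hc
    have hmt : Tendsto m atTop atTop := by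
      rw [tendsto_atTop]
      intro b
      have hev : ∀ᶠ n in atTop, ∀ v ∈ Finset.range b, m n ≠ v := by
        rw [Filter.eventually_all_finset]
        intro v _
        exact hc v
      filter_upwards [hev] with n hn
      by_contra hb
      push_neg at hb
      exact hn (m n) (Finset.mem_range.2 hb) rfl
    refine ⟨id, strictMono_id, fun g => ?_⟩
    obtain ⟨L, hL⟩ := hx g
    refine ⟨L, ?_⟩
    have := hL.comp hmt
    simp only [Function.comp_def, hm] at this
    simpa [Function.comp] using this

lemma p2'_to_lset (f : A →L[ℝ] ℝ)
    (h : ∀ x y : ℕ → A, WeaklyCauchy x → WeaklyNull y →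
        Tendsto (fun n => f (x n * y n)) atTop (𝓝 0)) :
    ∀ K : Set A, WeaklyPrecompact K → LSet (Tf f '' K) := by
  intro K hK z hz ε hε
  by_contra hcon
  push_neg at hcon
  have hfreq : ∃ᶠ n in atTop, ∃ a ∈ K, ε ≤ |f (a * z n)| := by
    rw [Filter.frequently_atTop]
    intro N
    obtain ⟨n, hn, g0, hg0, hg0'⟩ := hcon N
    obtain ⟨a, haK, rfl⟩ := hg0
    refine ⟨n, hn, a, haK, ?_⟩
    simpa [Tf] using hg0'
  obtain ⟨φ, hφ, hφP⟩ := Filter.extraction_of_frequently_atTop hfreq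
  choose a haK haε using hφP
  obtain ⟨σ, hσ, haC⟩ := hK a haK
  have hzn : WeaklyNull (fun k => z (φ (σ k))) := weaklyNull_comp hz (hφ.comp hσ)
  have := h (a ∘ σ) (fun k => z (φ (σ k))) haC hzn
  rw [Metric.tendsto_atTop] at this
  obtain ⟨N, hN⟩ := this ε hε
  have h1 := hN N le_rfl
  rw [Real.dist_eq, sub_zero] at h1
  exact absurd (haε (σ N)) (by simpa [Function.comp] using h1.not_ge)

lemma lset_to_p2' (f : A →L[ℝ] ℝ)
    (h3 : ∀ K : Set A, WeaklyPrecompact K → LSet (Tf f '' K)) :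
    ∀ x y : ℕ → A, WeaklyCauchy x → WeaklyNull y →
        Tendsto (fun n => f (x n * y n)) atTop (𝓝 0) := by
  intro x y hx hy
  have hL := h3 _ (range_weaklyPrecompact hx) y hy
  rw [Metric.tendsto_atTop]
  intro ε hε
  obtain ⟨N, hN⟩ := hL ε hε
  refine ⟨N, fun n hn => ?_⟩
  have := hN n hn (Tf f (x n)) ⟨x n, ⟨n, rfl⟩, rfl⟩
  simpa [Real.dist_eq, Tf] using this

end Aux

theorem wpL_equivalences {A : Type*} [NormedRing A] [NormedAlgebra ℝ A] [CompleteSpace A]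
    (f : A →L[ℝ] ℝ) :
    ((∀ x y : ℕ → A, WeaklyNull x → WeaklyNull y →
        Tendsto (fun n => f (x n * y n)) atTop (𝓝 0)) ↔
      (∀ x y : ℕ → A, WeaklyNull x → WeaklyCauchy y →
        Tendsto (fun n => f (x n * y n)) atTop (𝓝 0))) ∧
    ((∀ x y : ℕ → A, WeaklyNull x → WeaklyCauchy y →
        Tendsto (fun n => f (x n * y n)) atTop (𝓝 0)) ↔
      (∀ K : Set A, WeaklyPrecompact K → LSet (Tf f '' K))) := by
  constructor
  · exact ⟨fun h1 => p1_to_p2 f h1,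
      fun h2 x y hx hy => h2 x y hx (weaklyNull_wCauchy hy)⟩
  · constructor
    · intro h2
      exact p2'_to_lset f (p1_to_p2' f
        (fun x y hx hy => h2 x y hx (weaklyNull_wCauchy hy)))
    · intro h3
      exact p1_to_p2 f
        (fun x y hx hy => lset_to_p2' f h3 x y (weaklyNull_wCauchy hx) hy)
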